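/- Let x_1, ..., x_n be real numbers (n ≥ 1). Then max_{1≤i≤n} x_i − (1/n)·∑_{i=1}^n x_i ≥ (2/n³)·∑_{1≤i<j≤n} |x_i − x_j|. -/

import Mathlib

open Finset

theorem max_minus_average_ge_pairwise (n : ℕ) (hn : 1 ≤ n) (x : Fin n → ℝ) :
    Finset.univ.sup' (Finset.univ_nonempty_iff.mpr ⟨⟨0, hn⟩⟩) x
        - (1 / (n : ℝ)) * ∑ i, x i ≥
      (2 / (n : ℝ) ^ 3) *
        ∑ p ∈ Finset.univ.filter (fun p : Fin n × Fin n => p.1 < p.2),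
          |x p.1 - x p.2| := by
  have hne : (univ : Finset (Fin n)).Nonempty := Finset.univ_nonempty_iff.mpr ⟨⟨0, hn⟩⟩
  set M := univ.sup' (Finset.univ_nonempty_iff.mpr ⟨⟨0, hn⟩⟩) x with hM
  have hMx : ∀ i, x i ≤ M := fun i => Finset.le_sup' x (mem_univ i)
  set S : ℝ := ∑ i, (M - x i) with hS
  have hSnn : 0 ≤ S := Finset.sum_nonneg fun i _ => by linarith [hMx i]
  have hterm : ∀ p : Fin n × Fin n, p.1 < p.2 → |x p.1 - x p.2| ≤ S := by
    intro p hp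
    have hij : p.1 ≠ p.2 := ne_of_lt hp
    have h2 : (M - x p.1) + (M - x p.2) ≤ S := by
      have hsub : ({p.1, p.2} : Finset (Fin n)) ⊆ univ := Finset.subset_univ _
      have := Finset.sum_le_sum_of_subset_of_nonneg hsub
        (fun i _ _ => sub_nonneg.mpr (hMx i))
      rwa [Finset.sum_pair hij] at this
    rw [abs_sub_le_iff]
    constructor <;> nlinarith [hMx p.1, hMx p.2]
  set T := univ.filter (fun p : Fin n × Fin n => p.1 < p.2) with hT
  have hswap : (univ.filter (fun p : Fin n × Fin n => p.2 < p.1)).card = T.card := by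
    apply Finset.card_nbij' (fun p => p.swap) (fun p => p.swap)
    · intro p hp
      simp only [hT, Finset.mem_coe, mem_filter, mem_univ, true_and, Prod.fst_swap, Prod.snd_swap] at hp ⊢
      exact hp
    · intro p hp
      simp only [hT, Finset.mem_coe, mem_filter, mem_univ, true_and, Prod.fst_swap, Prod.snd_swap] at hp ⊢
      exact hp
    · intro p _; simp
    · intro p _; simp
  have hdisj : Disjoint T (univ.filter (fun p : Fin n × Fin n => p.2 < p.1)) := by
    rw [Finset.disjoint_left]
    intro p hp1 hp2
    simp only [hT, mem_filter] at hp1 hp2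
    exact absurd hp2.2 (not_lt.mpr hp1.2.le)
  have hcard : T.card * 2 ≤ n * n := by
    calc T.card * 2 = T.card + (univ.filter (fun p : Fin n × Fin n => p.2 < p.1)).card := by
          rw [hswap]; ring
      _ = (T ∪ univ.filter (fun p : Fin n × Fin n => p.2 < p.1)).card :=
          (Finset.card_union_of_disjoint hdisj).symm
      _ ≤ (univ : Finset (Fin n × Fin n)).card := Finset.card_le_card (subset_univ _)
      _ = n * n := by simp
  have hsum : ∑ p ∈ T, |x p.1 - x p.2| ≤ (T.card : ℝ) * S := by
    have := Finset.sum_le_card_nsmul T (fun p => |x p.1 - x p.2|) S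
      (fun p hp => hterm p (mem_filter.mp hp).2)
    simpa [nsmul_eq_mul] using this
  have hN : (0:ℝ) < n := by exact_mod_cast Nat.pos_of_ne_zero (by omega)
  have hSval : S = (n : ℝ) * M - ∑ i, x i := by
    rw [hS, Finset.sum_sub_distrib, Finset.sum_const, Finset.card_univ]
    simp [nsmul_eq_mul]
  have hcR : (T.card : ℝ) * 2 ≤ (n : ℝ) * n := by exact_mod_cast hcard
  have hPnn : 0 ≤ ∑ p ∈ T, |x p.1 - x p.2| :=
    Finset.sum_nonneg fun p _ => abs_nonneg _
  have key : 2 * (∑ p ∈ T, |x p.1 - x p.2|) ≤ (n : ℝ)^2 * S := by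
    nlinarith [mul_nonneg (by nlinarith : (0:ℝ) ≤ (n:ℝ)*n - (T.card:ℝ)*2) hSnn]
  rw [ge_iff_le]
  have hmain : (2 / (n : ℝ) ^ 3) * ∑ p ∈ T, |x p.1 - x p.2| ≤ S / n := by
    rw [div_mul_eq_mul_div, div_le_div_iff₀ (by positivity) hN]
    nlinarith [mul_nonneg hSnn hN.le]
  have hfin : S / n = M - (1 / (n:ℝ)) * ∑ i, x i := by
    rw [hSval]; field_simp
  linarith
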